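/- Let X₁, ..., Xₙ be negatively correlated binary random variables and X = X₁ + ... + Xₙ. Then for any δ ∈ [0,1], P(X ≤ (1-δ)·E[X]) ≤ exp(-δ²·E[X]/2). -/

import Mathlib

open MeasureTheory

lemma chernoff_aux_deriv {y : ℝ} (hy : y < 1) :
    HasDerivAt (fun x : ℝ => (1 - x) * Real.log (1 - x) + (x - x ^ 2 / 2))
      (-Real.log (1 - y) - y) y := by
  have h0 : (1 : ℝ) - y ≠ 0 := by linarith
  have h1 : HasDerivAt (fun x : ℝ => 1 - x) (-1) y := by
    simpa using (hasDerivAt_id y).const_sub 1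
  have hlog : HasDerivAt (fun x : ℝ => Real.log (1 - x)) ((1 - y)⁻¹ * -1) y :=
    (Real.hasDerivAt_log h0).comp y h1
  have hmul := h1.mul hlog
  have hsq : HasDerivAt (fun x : ℝ => x - x ^ 2 / 2) (1 - y) y := by
    have h2 := (hasDerivAt_pow 2 y).div_const 2
    exact ((hasDerivAt_id y).sub h2).congr_deriv (by norm_num)
  have := hmul.add hsq
  refine this.congr_deriv ?_
  rw [← mul_assoc, mul_inv_cancel₀ h0]
  ring

lemma chernoff_scalar {x : ℝ} (h0 : 0 ≤ x) (h1 : x < 1) :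
    x ^ 2 / 2 - x ≤ (1 - x) * Real.log (1 - x) := by
  have hmono : MonotoneOn (fun y : ℝ => (1 - y) * Real.log (1 - y) + (y - y ^ 2 / 2))
      (Set.Ico (0 : ℝ) 1) := by
    apply monotoneOn_of_hasDerivWithinAt_nonneg (f' := fun y => -Real.log (1 - y) - y)
      (convex_Ico 0 1)
    · intro y hy
      exact (chernoff_aux_deriv hy.2).continuousAt.continuousWithinAt
    · intro y hy
      rw [interior_Ico] at hy
      exact (chernoff_aux_deriv hy.2).hasDerivWithinAt
    · intro y hy
      rw [interior_Ico] at hy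
      have hlog := Real.log_le_sub_one_of_pos (x := 1 - y) (by linarith [hy.2])
      linarith
  have h00 : (fun y : ℝ => (1 - y) * Real.log (1 - y) + (y - y ^ 2 / 2)) 0
      ≤ (fun y : ℝ => (1 - y) * Real.log (1 - y) + (y - y ^ 2 / 2)) x :=
    hmono ⟨le_refl 0, one_pos⟩ ⟨h0, h1⟩ h0
  simp at h00
  linarith

/-- Multiplicative Chernoff lower-tail bound for sums of negatively correlated
binary random variables. -/
theorem chernoff_negatively_correlated
    {Ω : Type*} [MeasurableSpace Ω] (μ : Measure Ω) [IsProbabilityMeasure μ]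
    (n : ℕ) (X : Fin n → Ω → ℝ)
    (hmeas : ∀ i, Measurable (X i))
    (hbin : ∀ i ω, X i ω = 0 ∨ X i ω = 1)
    (hneg0 : ∀ I : Finset (Fin n),
      μ {ω | ∀ i ∈ I, X i ω = 0} ≤ ∏ i ∈ I, μ {ω | X i ω = 0})
    (hneg1 : ∀ I : Finset (Fin n),
      μ {ω | ∀ i ∈ I, X i ω = 1} ≤ ∏ i ∈ I, μ {ω | X i ω = 1})
    (δ : ℝ) (hδ0 : 0 ≤ δ) (hδ1 : δ ≤ 1) :
    μ {ω | (∑ i, X i ω) ≤ (1 - δ) * (∫ ω, (∑ i, X i ω) ∂μ)}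
      ≤ ENNReal.ofReal
          (Real.exp (-δ ^ 2 * (∫ ω, (∑ i, X i ω) ∂μ) / 2)) := by
  classical
  set m : ℝ := ∫ ω, (∑ i, X i ω) ∂μ with hm
  have hms0 : ∀ i, MeasurableSet {ω | X i ω = 0} := by
    intro i
    have h : {ω | X i ω = 0} = X i ⁻¹' {0} := by ext ω; simp
    rw [h]; exact (hmeas i) (measurableSet_singleton 0)
  have hms1 : ∀ i, MeasurableSet {ω | X i ω = 1} := by
    intro i
    have h : {ω | X i ω = 1} = X i ⁻¹' {1} := by ext ω; simp
    rw [h]; exact (hmeas i) (measurableSet_singleton 1)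
  set p : Fin n → ℝ := fun i => (μ {ω | X i ω = 1}).toReal with hp
  set q : Fin n → ℝ := fun i => (μ {ω | X i ω = 0}).toReal with hq
  have hXind : ∀ i ω,
      X i ω = Set.indicator {ω | X i ω = 1} (fun _ => (1 : ℝ)) ω := by
    intro i ω
    rcases hbin i ω with h | h
    · rw [Set.indicator_of_notMem (by simp [h]), h]
    · rw [Set.indicator_of_mem (by simpa using h), h]
  have hint1 : ∀ i, Integrable (X i) μ := by
    intro i
    rw [funext (hXind i)]
    exact (integrable_const 1).indicator (hms1 i)
  have hEXi : ∀ i, ∫ ω, X i ω ∂μ = p i := by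
    intro i
    rw [funext (hXind i), integral_indicator_const _ (hms1 i)]
    simp [hp]
    rfl
  have hEm : m = ∑ i, p i := by
    rw [hm, integral_finset_sum _ fun i _ => hint1 i]
    exact Finset.sum_congr rfl fun i _ => hEXi i
  have hpq : ∀ i, q i = 1 - p i := by
    intro i
    have hdisj : Disjoint {ω | X i ω = 0} {ω | X i ω = 1} := by
      rw [Set.disjoint_left]
      intro ω h0 h1
      simp only [Set.mem_setOf_eq] at h0 h1
      rw [h0] at h1; norm_num at h1
    have hunion : {ω | X i ω = 0} ∪ {ω | X i ω = 1} = Set.univ := by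
      ext ω; simpa using hbin i ω
    have hadd := measure_union (μ := μ) hdisj (hms1 i)
    rw [hunion, measure_univ] at hadd
    have h2 := congrArg ENNReal.toReal hadd
    rw [ENNReal.toReal_add (measure_ne_top μ _) (measure_ne_top μ _)] at h2
    simp only [ENNReal.toReal_one] at h2
    simp only [hq, hp]
    linarith
  have hp0 : ∀ i, 0 ≤ p i := fun i => ENNReal.toReal_nonneg
  have hq0 : ∀ i, 0 ≤ q i := fun i => ENNReal.toReal_nonneg
  have hp1 : ∀ i, p i ≤ 1 := fun i => by have := hpq i; linarith [hq0 i]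
  have hm0 : 0 ≤ m := by
    rw [hEm]; exact Finset.sum_nonneg fun i _ => hp0 i
  rcases eq_or_lt_of_le hδ1 with hδeq | hδlt
  · -- δ = 1
    subst hδeq
    have hsub : {ω | (∑ i, X i ω) ≤ (1 - 1) * m}
        ⊆ {ω | ∀ i ∈ (Finset.univ : Finset (Fin n)), X i ω = 0} := by
      intro ω hω
      simp only [Set.mem_setOf_eq] at hω ⊢
      have hnn : ∀ j ∈ Finset.univ, (0 : ℝ) ≤ X j ω := fun j _ => by
        rcases hbin j ω with h | h <;> rw [h] <;> norm_num
      have hz : ∑ i, X i ω = 0 := le_antisymm (by linarith [hω]) (Finset.sum_nonneg hnn)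
      intro i _
      exact (Finset.sum_eq_zero_iff_of_nonneg hnn).mp hz i (Finset.mem_univ i)
    have step : ∀ i, μ {ω | X i ω = 0} ≤ ENNReal.ofReal (Real.exp (-p i)) := by
      intro i
      rw [← ENNReal.ofReal_toReal (measure_ne_top μ {ω | X i ω = 0})]
      apply ENNReal.ofReal_le_ofReal
      have h3 := Real.add_one_le_exp (-p i)
      have h4 : (μ {ω | X i ω = 0}).toReal = q i := rfl
      rw [h4, hpq i]; linarith
    calc μ {ω | (∑ i, X i ω) ≤ (1 - 1) * m}
        ≤ μ {ω | ∀ i ∈ (Finset.univ : Finset (Fin n)), X i ω = 0} := measure_mono hsub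
      _ ≤ ∏ i, μ {ω | X i ω = 0} := hneg0 Finset.univ
      _ ≤ ∏ i, ENNReal.ofReal (Real.exp (-p i)) :=
          Finset.prod_le_prod' fun i _ => step i
      _ = ENNReal.ofReal (∏ i, Real.exp (-p i)) :=
          (ENNReal.ofReal_prod_of_nonneg fun i _ => (Real.exp_pos _).le).symm
      _ = ENNReal.ofReal (Real.exp (∑ i, -p i)) := by rw [Real.exp_sum]
      _ ≤ ENNReal.ofReal (Real.exp (-1 ^ 2 * m / 2)) := by
          apply ENNReal.ofReal_le_ofReal
          apply Real.exp_le_exp.mpr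
          rw [Finset.sum_neg_distrib, ← hEm]
          nlinarith [hm0]
  · -- δ < 1
    set t : ℝ := -Real.log (1 - δ) with ht
    have h1δ : (0 : ℝ) < 1 - δ := by linarith
    have het : Real.exp (-t) = 1 - δ := by
      rw [ht, neg_neg, Real.exp_log h1δ]
    have ht0 : 0 ≤ t := by
      rw [ht]
      have := Real.log_nonpos (by linarith) (by linarith : (1:ℝ) - δ ≤ 1)
      linarith
    set Y : Fin n → Ω → ℝ := fun i ω => if X i ω = 0 then 1 else 0 with hY
    have hexpY : ∀ ω, Real.exp (-t * ∑ i, X i ω) = ∏ i, ((1 - δ) + δ * Y i ω) := by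
      intro ω
      rw [show -t * ∑ i, X i ω = ∑ i, -t * X i ω from Finset.mul_sum _ _ _,
        Real.exp_sum]
      refine Finset.prod_congr rfl fun i _ => ?_
      rcases hbin i ω with h | h
      · simp [hY, h]
      · have h1 : X i ω ≠ 0 := by rw [h]; norm_num
        rw [show Y i ω = 0 from if_neg h1, h]
        rw [mul_zero, add_zero, mul_one]
        exact het
    set S : Finset (Fin n) → Set Ω := fun I => {ω | ∀ i ∈ I, X i ω = 0} with hS
    have hSmeas : ∀ I, MeasurableSet (S I) := by
      intro I
      have h : S I = ⋂ i ∈ I, {ω | X i ω = 0} := by ext ω; simp [hS]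
      rw [h]
      exact MeasurableSet.biInter (Set.to_countable _) fun i _ => hms0 i
    have hprodY : ∀ (I : Finset (Fin n)) ω,
        (∏ i ∈ I, Y i ω) = Set.indicator (S I) (fun _ => (1 : ℝ)) ω := by
      intro I ω
      by_cases h : ω ∈ S I
      · rw [Set.indicator_of_mem h]
        exact Finset.prod_eq_one fun i hi => by simp [hY, h i hi]
      · rw [Set.indicator_of_notMem h]
        simp only [hS, Set.mem_setOf_eq, not_forall] at h
        obtain ⟨i, hi, hne⟩ := h
        exact Finset.prod_eq_zero hi (by simp [hY, hne])
    have hexpand : ∀ ω, Real.exp (-t * ∑ i, X i ω)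
        = ∑ I ∈ (Finset.univ : Finset (Fin n)).powerset,
            δ ^ I.card * (1 - δ) ^ (Finset.univ \ I).card
              * Set.indicator (S I) (fun _ => (1 : ℝ)) ω := by
      intro ω
      rw [hexpY ω]
      have h1 : ∀ i ∈ (Finset.univ : Finset (Fin n)),
          (1 - δ) + δ * Y i ω = δ * Y i ω + (1 - δ) := fun i _ => add_comm _ _
      rw [Finset.prod_congr rfl h1, Finset.prod_add]
      refine Finset.sum_congr rfl fun I _ => ?_
      rw [Finset.prod_mul_distrib, Finset.prod_const, Finset.prod_const, hprodY]
      ring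
    have hintsummand : ∀ I : Finset (Fin n),
        Integrable (fun ω => δ ^ I.card * (1 - δ) ^ (Finset.univ \ I).card
          * Set.indicator (S I) (fun _ => (1 : ℝ)) ω) μ :=
      fun I => ((integrable_const (1 : ℝ)).indicator (hSmeas I)).const_mul _
    have hintexp : Integrable (fun ω => Real.exp (-t * ∑ i, X i ω)) μ := by
      rw [funext hexpand]
      exact integrable_finset_sum _ fun I _ => hintsummand I
    have hintle : ∫ ω, Real.exp (-t * ∑ i, X i ω) ∂μ ≤ Real.exp (-δ * m) := by
      have hval : ∫ ω, Real.exp (-t * ∑ i, X i ω) ∂μ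
          = ∑ I ∈ (Finset.univ : Finset (Fin n)).powerset,
              δ ^ I.card * (1 - δ) ^ (Finset.univ \ I).card * (μ (S I)).toReal := by
        rw [funext hexpand, integral_finset_sum _ fun I _ => hintsummand I]
        refine Finset.sum_congr rfl fun I _ => ?_
        rw [integral_const_mul, integral_indicator_const _ (hSmeas I)]
        simp [Measure.real]
      rw [hval]
      calc ∑ I ∈ (Finset.univ : Finset (Fin n)).powerset,
              δ ^ I.card * (1 - δ) ^ (Finset.univ \ I).card * (μ (S I)).toReal
          ≤ ∑ I ∈ (Finset.univ : Finset (Fin n)).powerset,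
              δ ^ I.card * (1 - δ) ^ (Finset.univ \ I).card * ∏ i ∈ I, q i := by
            refine Finset.sum_le_sum fun I _ => ?_
            refine mul_le_mul_of_nonneg_left ?_
              (mul_nonneg (pow_nonneg hδ0 _) (pow_nonneg h1δ.le _))
            have hfin : (∏ i ∈ I, μ {ω | X i ω = 0}) ≠ ⊤ :=
              (ENNReal.prod_lt_top fun i _ => measure_lt_top μ _).ne
            calc (μ (S I)).toReal
                ≤ (∏ i ∈ I, μ {ω | X i ω = 0}).toReal :=
                  ENNReal.toReal_mono hfin (hneg0 I)
              _ = ∏ i ∈ I, q i := ENNReal.toReal_prod _ _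
        _ = ∏ i, (δ * q i + (1 - δ)) := by
            rw [Finset.prod_add]
            refine Finset.sum_congr rfl fun I _ => ?_
            rw [Finset.prod_mul_distrib, Finset.prod_const, Finset.prod_const]
            ring
        _ ≤ ∏ i, Real.exp (-(δ * p i)) := by
            refine Finset.prod_le_prod (fun i _ => ?_) fun i _ => ?_
            · have := hq0 i; positivity
            · have h3 := Real.add_one_le_exp (-(δ * p i))
              rw [hpq i]; linarith
        _ = Real.exp (-δ * m) := by
            rw [← Real.exp_sum]
            congr 1
            rw [hEm, Finset.mul_sum]
            simp [Finset.sum_neg_distrib, mul_comm]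
    have hset : {ω | (∑ i, X i ω) ≤ (1 - δ) * m}
        ⊆ {ω | Real.exp (-t * ((1 - δ) * m)) ≤ Real.exp (-t * ∑ i, X i ω)} := by
      intro ω hω
      simp only [Set.mem_setOf_eq] at hω ⊢
      apply Real.exp_le_exp.mpr
      nlinarith [mul_le_mul_of_nonneg_left hω ht0]
    have hmarkov := mul_meas_ge_le_integral_of_nonneg
      (ae_of_all μ fun ω => (Real.exp_pos (-t * ∑ i, X i ω)).le) hintexp
      (Real.exp (-t * ((1 - δ) * m)))
    set ε : ℝ := Real.exp (-t * ((1 - δ) * m)) with hε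
    have hεpos : 0 < ε := Real.exp_pos _
    have hA : (μ {ω | (∑ i, X i ω) ≤ (1 - δ) * m}).toReal
        ≤ Real.exp (-δ ^ 2 * m / 2) := by
      have h1 : (μ {ω | (∑ i, X i ω) ≤ (1 - δ) * m}).toReal
          ≤ (μ {ω | ε ≤ Real.exp (-t * ∑ i, X i ω)}).toReal :=
        ENNReal.toReal_mono (measure_ne_top μ _) (measure_mono hset)
      have h2 : (μ {ω | ε ≤ Real.exp (-t * ∑ i, X i ω)}).toReal
          ≤ (∫ ω, Real.exp (-t * ∑ i, X i ω) ∂μ) / ε := by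
        rw [le_div_iff₀ hεpos, mul_comm]
        exact hmarkov
      have h3 : (∫ ω, Real.exp (-t * ∑ i, X i ω) ∂μ) / ε ≤ Real.exp (-δ * m) / ε :=
        (div_le_div_iff_of_pos_right hεpos).mpr hintle
      have h4 : Real.exp (-δ * m) / ε = Real.exp (-δ * m + t * ((1 - δ) * m)) := by
        rw [hε, ← Real.exp_sub]
        ring_nf
      have h5 : Real.exp (-δ * m + t * ((1 - δ) * m)) ≤ Real.exp (-δ ^ 2 * m / 2) := by
        apply Real.exp_le_exp.mpr
        have hs := chernoff_scalar hδ0 hδlt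
        have h6 := mul_le_mul_of_nonneg_right hs hm0
        rw [ht]
        nlinarith
      linarith
    calc μ {ω | (∑ i, X i ω) ≤ (1 - δ) * m}
        = ENNReal.ofReal ((μ {ω | (∑ i, X i ω) ≤ (1 - δ) * m}).toReal) :=
          (ENNReal.ofReal_toReal (measure_ne_top μ _)).symm
      _ ≤ ENNReal.ofReal (Real.exp (-δ ^ 2 * m / 2)) := ENNReal.ofReal_le_ofReal hA
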